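/- Let d be a square-free integer with d ≡ 1 (mod 4) and d not divisible by 7, and let K = ℚ(√-7). Then the elliptic curve E: y² = x³ + 21dx² + 112d²x over ℚ has discriminant whose odd part involves 7 and d, and E has good reduction at 2 (equivalently its discriminant has 2-adic valuation compatible with a minimal model of good reduction at 2). -/

import Mathlib

/-- Let `d` be a square-free integer with `d ≡ 1 (mod 4)` and `7 ∤ d`.  Then the elliptic
curve `E : y² = x³ + 21dx² + 112d²x` over `ℚ` has good reduction at `2`: there is a
Weierstrass model with integral coefficients, related to `E` by a change of variables
over `ℚ`, whose discriminant is a `2`-adic unit (i.e. odd at the prime `2`). -/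
theorem stmt_9 (d : ℤ) (hsf : Squarefree d) (hd4 : d % 4 = 1) (hd7 : ¬ (7 : ℤ) ∣ d)
    (E : WeierstrassCurve ℚ)
    (hE : E = { a₁ := 0, a₂ := 21 * (d : ℚ), a₃ := 0, a₄ := 112 * (d : ℚ) ^ 2, a₆ := 0 }) :
    ∃ (W : WeierstrassCurve ℤ) (C : WeierstrassCurve.VariableChange ℚ),
      C • E = W.map (Int.castRingHom ℚ) ∧ ¬ (2 : ℤ) ∣ W.Δ := by
  set k : ℤ := d / 4 with hk
  have hdk : d = 4 * k + 1 := by omega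
  refine ⟨⟨1, 33 * k + 8, 3, 328 * k ^ 2 + 164 * k + 19,
      848 * k ^ 3 + 636 * k ^ 2 + 159 * k + 11⟩,
    ⟨Units.mk0 2 (by norm_num), 4 * (d : ℚ), 1, 12⟩, ?_, ?_⟩
  · have hcast : (d : ℚ) = 4 * (k : ℚ) + 1 := by exact_mod_cast congrArg (fun n : ℤ => (n : ℚ)) hdk
    subst hE
    rw [WeierstrassCurve.variableChange_def]
    ext <;>
      simp [WeierstrassCurve.map, hcast] <;>
      push_cast <;> ring
  · have hΔ : (⟨1, 33 * k + 8, 3, 328 * k ^ 2 + 164 * k + 19,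
        848 * k ^ 3 + 636 * k ^ 2 + 159 * k + 11⟩ : WeierstrassCurve ℤ).Δ
        = -343 * d ^ 6 := by
      simp only [WeierstrassCurve.Δ, WeierstrassCurve.b₂, WeierstrassCurve.b₄,
        WeierstrassCurve.b₆, WeierstrassCurve.b₈, hdk]
      ring
    rw [hΔ]
    have hodd : Odd (-343 * d ^ 6) := by
      refine Odd.mul ⟨-172, by ring⟩ (Odd.pow ?_)
      rw [Int.odd_iff]; omega
    rw [Int.odd_iff] at hodd
    omega
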